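/- arXiv:2202.03915 — 4 statements merged into one kernel-verified Lean document; each statement's English description precedes it below -/
import Mathlib

section
/- (Sieve inequality.) Let q be a prime power, m a positive integer, β ∈ F_q, and let a, b, c ∈ F_{q^m} with a ≠ 0 and b² − 4ac ≠ 0. Let r be a divisor of q^m − 1 and let p₁, p₂, …, p_n be the distinct primes that divide q^m − 1 but do not divide r. Then M(q^m − 1, q^m − 1) ≥ Σ_{i=1}^{n} M(p_i r, r) + Σ_{i=1}^{n} M(r, p_i r) − (2n − 1)·M(r, r). -/
/-- An element `α` of a field is `r`-free if whenever `d ∣ r` and `α = γ^d`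
for some `γ`, then `d = 1`. -/
def IsRFree {F : Type*} [Field F] (r : ℕ) (α : F) : Prop :=
  ∀ d : ℕ, d ∣ r → (∃ γ : F, α = γ ^ d) → d = 1

/-- `M(r₁, r₂)`: the number of `α ∈ F_{q^m}^*` with `a·α² + b·α + c ≠ 0` such that
`α` is `r₁`-free, `a·α² + b·α + c` is `r₂`-free, and `Tr(α) = β`. -/
noncomputable def Mcount (K F : Type) [Field K] [Field F] [Algebra K F]
    (a b c : F) (β : K) (r₁ r₂ : ℕ) : ℕ :=
  Nat.card {α : F // α ≠ 0 ∧ a * α ^ 2 + b * α + c ≠ 0 ∧ IsRFree r₁ α ∧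
    IsRFree r₂ (a * α ^ 2 + b * α + c) ∧ Algebra.trace K F α = β}

lemma isRFree_of_dvd {F : Type*} [Field F] {r₁ r₂ : ℕ} (h : r₁ ∣ r₂) {α : F}
    (hα : IsRFree r₂ α) : IsRFree r₁ α :=
  fun d hd => hα d (hd.trans h)

lemma isRFree_full {F : Type*} [Field F] {N : ℕ} (hN : N ≠ 0) {α : F}
    (h : ∀ p : ℕ, p.Prime → p ∣ N → ¬ ∃ γ : F, α = γ ^ p) : IsRFree N α := by
  intro d hd hex
  obtain ⟨γ, hγ⟩ := hex
  by_contra hd1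
  have hpd : d.minFac ∣ d := Nat.minFac_dvd d
  refine h d.minFac (Nat.minFac_prime hd1) (hpd.trans hd) ⟨γ ^ (d / d.minFac), ?_⟩
  rw [← pow_mul, Nat.div_mul_cancel hpd, hγ]

lemma isRFree_of_forall {F : Type*} [Field F] {N r : ℕ} (hN : N ≠ 0) (hr : r ∣ N)
    {P : Finset ℕ} (hP : ∀ x : ℕ, x ∈ P ↔ x.Prime ∧ x ∣ N ∧ ¬ x ∣ r) {α : F}
    (h1 : IsRFree r α) (h2 : ∀ p ∈ P, IsRFree (p * r) α) : IsRFree N α := by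
  refine isRFree_full hN ?_
  intro p hp hpN hex
  by_cases hpr : p ∣ r
  · exact hp.one_lt.ne' (h1 p hpr hex)
  · exact hp.one_lt.ne' (h2 p ((hP p).mpr ⟨hp, hpN, hpr⟩) p (dvd_mul_right p r) hex)

/-- Sieve inequality: if `P` is the set of distinct primes dividing `q^m − 1` but not `r`,
with `n = |P|`, then
`M(q^m−1, q^m−1) ≥ Σ_{p ∈ P} M(p r, r) + Σ_{p ∈ P} M(r, p r) − (2n − 1)·M(r, r)`. -/
theorem Mcount_sieve_inequality
    (q m : ℕ) (hq : IsPrimePow q) (hm : 0 < m)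
    (K F : Type) [Field K] [Fintype K] [Field F] [Fintype F] [Algebra K F]
    (hcardK : Fintype.card K = q) (hcardF : Fintype.card F = q ^ m)
    (β : K) (a b c : F) (ha : a ≠ 0) (hdisc : b ^ 2 - 4 * a * c ≠ 0)
    (r : ℕ) (hr : r ∣ q ^ m - 1)
    (P : Finset ℕ) (hP : ∀ x : ℕ, x ∈ P ↔ x.Prime ∧ x ∣ q ^ m - 1 ∧ ¬ x ∣ r) :
    (Mcount K F a b c β (q ^ m - 1) (q ^ m - 1) : ℝ) ≥
      (∑ p ∈ P, (Mcount K F a b c β (p * r) r : ℝ)) +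
      (∑ p ∈ P, (Mcount K F a b c β r (p * r) : ℝ)) -
      (2 * (P.card : ℝ) - 1) * (Mcount K F a b c β r r : ℝ) := by
  classical
  set N := q ^ m - 1 with hNdef
  have hq2 : 2 ≤ q := hq.two_le
  have hqm : 2 ≤ q ^ m := le_trans hq2 (Nat.le_self_pow hm.ne' q)
  have hN0 : N ≠ 0 := by omega
  -- predicates and filtered sets
  set pred : ℕ → ℕ → F → Prop := fun r₁ r₂ α =>
    α ≠ 0 ∧ a * α ^ 2 + b * α + c ≠ 0 ∧ IsRFree r₁ α ∧
      IsRFree r₂ (a * α ^ 2 + b * α + c) ∧ Algebra.trace K F α = β with hpred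
  have hM : ∀ r₁ r₂ : ℕ, Mcount K F a b c β r₁ r₂ =
      (Finset.univ.filter (pred r₁ r₂)).card := by
    intro r₁ r₂
    rw [Mcount, Nat.card_eq_fintype_card, Fintype.card_subtype]
  set S := Finset.univ.filter (pred r r) with hS
  set T := Finset.univ.filter (pred N N) with hT
  set A : ℕ → Finset F := fun p => Finset.univ.filter (pred (p * r) r) with hA
  set B : ℕ → Finset F := fun p => Finset.univ.filter (pred r (p * r)) with hB
  have hprN : ∀ p ∈ P, p * r ∣ N := by
    intro p hp
    obtain ⟨hp1, hp2, hp3⟩ := (hP p).mp hp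
    exact (Nat.Coprime.mul_dvd_of_dvd_of_dvd ((Nat.Prime.coprime_iff_not_dvd hp1).mpr hp3) hp2 hr)
  have hTS : T ⊆ S := by
    intro α hα
    simp only [hT, hS, Finset.mem_filter, hpred] at *
    obtain ⟨hu, h1, h2, h3, h4, h5⟩ := hα
    exact ⟨hu, h1, h2, isRFree_of_dvd hr h3, isRFree_of_dvd hr h4, h5⟩
  have hAS : ∀ p ∈ P, A p ⊆ S := by
    intro p hp α hα
    simp only [hA, hS, Finset.mem_filter, hpred] at *
    obtain ⟨hu, h1, h2, h3, h4, h5⟩ := hα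
    exact ⟨hu, h1, h2, isRFree_of_dvd (dvd_mul_left r p) h3, h4, h5⟩
  have hBS : ∀ p ∈ P, B p ⊆ S := by
    intro p hp α hα
    simp only [hB, hS, Finset.mem_filter, hpred] at *
    obtain ⟨hu, h1, h2, h3, h4, h5⟩ := hα
    exact ⟨hu, h1, h2, h3, isRFree_of_dvd (dvd_mul_left r p) h4, h5⟩
  have hsub : S \ T ⊆ (P.biUnion fun p => S \ A p) ∪ (P.biUnion fun p => S \ B p) := by
    intro α hα
    rw [Finset.mem_sdiff] at hα
    obtain ⟨hαS, hαT⟩ := hα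
    by_contra hcon
    simp only [Finset.mem_union, Finset.mem_biUnion, Finset.mem_sdiff, not_or,
      not_exists, not_and, not_not] at hcon
    obtain ⟨hc1, hc2⟩ := hcon
    apply hαT
    have hαS' := hαS
    simp only [hS, Finset.mem_filter, hpred] at hαS'
    obtain ⟨hu, h1, h2, h3, h4, h5⟩ := hαS'
    have hAall : ∀ p ∈ P, IsRFree (p * r) α := by
      intro p hp
      have := hc1 p hp hαS
      simp only [hA, Finset.mem_filter, hpred] at this
      exact this.2.2.2.1
    have hBall : ∀ p ∈ P, IsRFree (p * r) (a * α ^ 2 + b * α + c) := by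
      intro p hp
      have := hc2 p hp hαS
      simp only [hB, Finset.mem_filter, hpred] at this
      exact this.2.2.2.2.1
    simp only [hT, Finset.mem_filter, hpred]
    exact ⟨Finset.mem_univ α, h1, h2, isRFree_of_forall hN0 hr hP h3 hAall,
      isRFree_of_forall hN0 hr hP h4 hBall, h5⟩
  -- cardinality arithmetic
  have hcard1 : (S \ T).card ≤
      ∑ p ∈ P, (S \ A p).card + ∑ p ∈ P, (S \ B p).card := by
    calc (S \ T).card ≤ ((P.biUnion fun p => S \ A p) ∪ (P.biUnion fun p => S \ B p)).card :=
          Finset.card_le_card hsub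
      _ ≤ (P.biUnion fun p => S \ A p).card + (P.biUnion fun p => S \ B p).card :=
          Finset.card_union_le _ _
      _ ≤ ∑ p ∈ P, (S \ A p).card + ∑ p ∈ P, (S \ B p).card :=
          Nat.add_le_add (Finset.card_biUnion_le) (Finset.card_biUnion_le)
  have hST : ((S \ T).card : ℝ) = (S.card : ℝ) - (T.card : ℝ) := by
    rw [Finset.card_sdiff_of_subset hTS, Nat.cast_sub (Finset.card_le_card hTS)]
  have hSA : ∀ p ∈ P, ((S \ A p).card : ℝ) = (S.card : ℝ) - ((A p).card : ℝ) := by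
    intro p hp
    rw [Finset.card_sdiff_of_subset (hAS p hp), Nat.cast_sub (Finset.card_le_card (hAS p hp))]
  have hSB : ∀ p ∈ P, ((S \ B p).card : ℝ) = (S.card : ℝ) - ((B p).card : ℝ) := by
    intro p hp
    rw [Finset.card_sdiff_of_subset (hBS p hp), Nat.cast_sub (Finset.card_le_card (hBS p hp))]
  have hcard1' : ((S \ T).card : ℝ) ≤
      ∑ p ∈ P, ((S \ A p).card : ℝ) + ∑ p ∈ P, ((S \ B p).card : ℝ) := by
    push_cast
    exact_mod_cast hcard1
  rw [hST, Finset.sum_congr rfl hSA, Finset.sum_congr rfl hSB] at hcard1'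
  rw [Finset.sum_sub_distrib, Finset.sum_sub_distrib, Finset.sum_const, nsmul_eq_mul] at hcard1'
  have final : ((T.card : ℝ)) ≥ (∑ p ∈ P, ((A p).card : ℝ)) + (∑ p ∈ P, ((B p).card : ℝ)) -
      (2 * (P.card : ℝ) - 1) * (S.card : ℝ) := by linarith [hcard1']
  simp only [hM]
  exact final
end

section
/- Let N be a positive integer with ω(N) ≥ 85. Then W(N) < N^{1/7}. -/
/-- `W n = 2^{ω(n)}` where `ω(n)` is the number of distinct prime divisors of `n`. -/
def W (n : ℕ) : ℕ := 2 ^ n.primeFactors.card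

/-- The product of the first `|S|` primes is at most the product of any finset `S` of primes. -/
lemma prod_nth_le (S : Finset ℕ) (hS : ∀ p ∈ S, p.Prime) :
    ∏ i ∈ Finset.range S.card, Nat.nth Nat.Prime i ≤ ∏ p ∈ S, p := by
  obtain ⟨n, hn⟩ : ∃ n, S.card = n := ⟨_, rfl⟩
  induction n generalizing S with
  | zero => rw [hn]; simpa using Finset.one_le_prod' fun p hp => (hS p hp).one_lt.le
  | succ n ih =>
    have hne : S.Nonempty := Finset.card_pos.mp (by omega)
    set m := S.max' hne with hm
    have hmS : m ∈ S := S.max'_mem hne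
    have hcard : (S.erase m).card = n := by
      rw [Finset.card_erase_of_mem hmS, hn]; rfl
    have hcount : n < Nat.count Nat.Prime (m + 1) := by
      have hsub : S ⊆ (Finset.range (m + 1)).filter (fun x => Nat.Prime x) := by
        intro p hp
        simp only [Finset.mem_filter, Finset.mem_range]
        exact ⟨Nat.lt_succ_of_le (S.le_max' p hp), hS p hp⟩
      have h2 := Finset.card_le_card hsub
      rw [Nat.count_eq_card_filter_range]
      omega
    have hnth : Nat.nth Nat.Prime n ≤ m :=
      Nat.lt_succ_iff.mp (Nat.nth_lt_of_lt_count hcount)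
    have ihh := ih (S.erase m) (fun p hp => hS p (Finset.erase_subset _ _ hp)) hcard
    rw [hcard] at ihh
    rw [hn]
    calc ∏ i ∈ Finset.range (n+1), Nat.nth Nat.Prime i
        = (∏ i ∈ Finset.range n, Nat.nth Nat.Prime i) * Nat.nth Nat.Prime n := by
          rw [Finset.prod_range_succ]
      _ ≤ (∏ p ∈ S.erase m, p) * m := Nat.mul_le_mul ihh hnth
      _ = ∏ p ∈ S, p := (mul_comm _ _).trans (Finset.mul_prod_erase S (fun p => p) hmS)

set_option maxRecDepth 100000 in
lemma count443 : Nat.count Nat.Prime 443 = 85 := by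
  have h : @Nat.count Nat.Prime (fun n => Nat.decidablePrime n) 443 = 85 := by decide
  convert h using 2

set_option maxRecDepth 100000 in
lemma count440 : Nat.count Nat.Prime 440 = 85 := by
  have h : @Nat.count Nat.Prime (fun n => Nat.decidablePrime n) 440 = 85 := by decide
  convert h using 2

lemma nth85 : Nat.nth Nat.Prime 85 = 443 := by
  conv_lhs => rw [← count443]
  exact Nat.nth_count (by norm_num)

lemma image_nth : (Finset.range 85).image (Nat.nth Nat.Prime)
    = (Finset.range 440).filter (fun x => Nat.Prime x) := by
  apply Finset.Subset.antisymm
  · intro x hx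
    simp only [Finset.mem_image, Finset.mem_range] at hx
    obtain ⟨i, hi, rfl⟩ := hx
    simp only [Finset.mem_filter, Finset.mem_range]
    refine ⟨Nat.nth_lt_of_lt_count ?_, Nat.prime_nth_prime i⟩
    rw [count440]; exact hi
  · intro p hp
    simp only [Finset.mem_filter, Finset.mem_range] at hp
    obtain ⟨hp440, hpp⟩ := hp
    simp only [Finset.mem_image, Finset.mem_range]
    refine ⟨Nat.count Nat.Prime p, ?_, Nat.nth_count hpp⟩
    have h1 : Nat.count Nat.Prime (p+1) ≤ Nat.count Nat.Prime 440 :=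
      Nat.count_monotone _ hp440
    rw [Nat.count_succ, if_pos hpp, count440] at h1
    omega

set_option maxRecDepth 100000 in
lemma bigP : (2:ℕ)^595 < ∏ i ∈ Finset.range 85, Nat.nth Nat.Prime i := by
  have h : (2:ℕ)^595 < ∏ x ∈ @Finset.filter ℕ (fun x => Nat.Prime x)
      (fun x => Nat.decidablePrime x) (Finset.range 440), x := by decide
  calc (2:ℕ)^595 < ∏ x ∈ (Finset.range 440).filter (fun x => Nat.Prime x), x := by
        rwa [Finset.filter_congr_decidable] at h
    _ = ∏ i ∈ Finset.range 85, Nat.nth Nat.Prime i := by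
        rw [← image_nth, Finset.prod_image
          (fun a _ b _ hab => Nat.nth_injective Nat.infinite_setOf_prime hab)]

lemma prod_first (k : ℕ) (hk : 85 ≤ k) :
    2 ^ (7 * k) < ∏ i ∈ Finset.range k, Nat.nth Nat.Prime i := by
  induction k, hk using Nat.le_induction with
  | base => simpa using bigP
  | succ k hk ih =>
    have h443 : 443 ≤ Nat.nth Nat.Prime k := by
      rw [← nth85]
      exact Nat.nth_monotone Nat.infinite_setOf_prime hk
    calc 2 ^ (7 * (k + 1)) = 2 ^ (7 * k) * 128 := by ring
      _ < (∏ i ∈ Finset.range k, Nat.nth Nat.Prime i) * Nat.nth Nat.Prime k :=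
        Nat.mul_lt_mul_of_lt_of_le ih (by omega) (by positivity)
      _ = ∏ i ∈ Finset.range (k+1), Nat.nth Nat.Prime i := (Finset.prod_range_succ _ _).symm

/-- If `N` is a positive integer with at least 85 distinct prime factors,
then `W(N) < N^{1/7}`. -/
theorem W_lt_rpow_seventh (N : ℕ) (hN : 0 < N) (hω : 85 ≤ N.primeFactors.card) :
    (W N : ℝ) < (N : ℝ) ^ ((1 : ℝ) / 7) := by
  set k := N.primeFactors.card with hk
  have h1 : 2 ^ (7 * k) < N := by
    calc 2 ^ (7 * k) < ∏ i ∈ Finset.range k, Nat.nth Nat.Prime i := prod_first k hω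
      _ ≤ ∏ p ∈ N.primeFactors, p :=
        prod_nth_le _ (fun p hp => Nat.prime_of_mem_primeFactors hp)
      _ ≤ N := Nat.le_of_dvd hN (Nat.prod_primeFactors_dvd N)
  have h2 : ((2:ℝ) ^ k) ^ (7:ℕ) < (N : ℝ) := by
    rw [← pow_mul]
    calc ((2:ℝ)) ^ (k * 7) = ((2 ^ (7 * k) : ℕ) : ℝ) := by push_cast; ring
      _ < (N : ℝ) := by exact_mod_cast h1
  have hx : (0:ℝ) ≤ (2:ℝ) ^ k := by positivity
  have h3 : ((2:ℝ) ^ k) < (N : ℝ) ^ ((1:ℝ)/7) := by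
    have := Real.rpow_lt_rpow (by positivity) h2 (by norm_num : (0:ℝ) < 1/7)
    rwa [← Real.rpow_natCast ((2:ℝ)^k) 7, ← Real.rpow_mul hx,
      (by norm_num : ((7:ℕ):ℝ) * (1/7) = 1), Real.rpow_one] at this
  calc (W N : ℝ) = (2:ℝ) ^ k := by simp [W, hk]
    _ < _ := h3
end

section
/- Let m be a positive integer such that 2^m − 1 is a Mersenne prime with 2^m − 1 > 13. Let a, b, c ∈ F_{2^m} with a ≠ 0 and b² − 4ac ≠ 0, and let β ∈ F_2 be arbitrary. Then there exists a primitive element α of F_{2^m} such that aα² + bα + c is also a primitive element of F_{2^m} and Tr_{F_{2^m}/F_2}(α) = β. -/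
lemma aux_card_filter_eq {F : Type} [Field F] [Fintype F] [DecidableEq F]
    [Algebra (ZMod 2) F] (x0 : F) (hx0 : Algebra.trace (ZMod 2) F x0 = 1) (β : ZMod 2) :
    2 * (Finset.univ.filter (fun α : F => Algebra.trace (ZMod 2) F α = β)).card
      = Fintype.card F := by
  classical
  set f := Algebra.trace (ZMod 2) F with hf
  have key : ∀ γ : ZMod 2,
      (Finset.univ.filter (fun α : F => f α = γ)).card
        = (Finset.univ.filter (fun α : F => f α = γ + 1)).card := by
    intro γ
    have h2 : ∀ δ : ZMod 2, δ + 1 + 1 = δ := by decide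
    have hF2 : CharP F 2 := charP_of_injective_algebraMap
      (algebraMap (ZMod 2) F).injective 2
    have hself : ∀ x : F, x + x0 + x0 = x := by
      intro x
      rw [add_assoc, CharTwo.add_self_eq_zero, add_zero]
    apply Finset.card_bij (fun α _ => α + x0)
    · intro α hα
      simp only [Finset.mem_filter, Finset.mem_univ, true_and] at hα ⊢
      rw [map_add, hα, hx0]
    · intro α _ α' _ h
      exact add_right_cancel h
    · intro α hα
      simp only [Finset.mem_filter, Finset.mem_univ, true_and] at hα
      refine ⟨α + x0, ?_, hself α⟩
      simp only [Finset.mem_filter, Finset.mem_univ, true_and, map_add, hα, hx0, h2]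
  have hpart : (Finset.univ.filter (fun α : F => f α = β)).card
      + (Finset.univ.filter (fun α : F => f α = β + 1)).card = Fintype.card F := by
    rw [← Finset.card_union_of_disjoint]
    · congr 1
      apply Finset.eq_univ_iff_forall.mpr
      intro α
      simp only [Finset.mem_union, Finset.mem_filter, Finset.mem_univ, true_and]
      have : f α = β ∨ f α = β + 1 := by
        have := f α; revert β
        generalize f α = y
        revert y; decide
      exact this
    · rw [Finset.disjoint_filter]
      intro α _ h1 h2
      rw [h1] at h2
      have h0 : (0 : ZMod 2) = 1 := by linear_combination h2
      exact absurd h0 (by decide)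
  rw [← key β] at hpart
  omega

lemma aux_quad_fiber_card {F : Type} [Field F] [Fintype F] [DecidableEq F]
    (a b c v : F) (ha : a ≠ 0) :
    (Finset.univ.filter (fun α : F => a * α ^ 2 + b * α + c = v)).card ≤ 2 := by
  classical
  set p : Polynomial F := Polynomial.C a * Polynomial.X ^ 2 + Polynomial.C b * Polynomial.X
      + Polynomial.C (c - v) with hpdef
  have hpne : p ≠ 0 := by
    intro h
    have hdeg : p.coeff 2 = a := by
      simp [hpdef, Polynomial.coeff_add, Polynomial.coeff_C_mul, Polynomial.coeff_X_pow,
        Polynomial.coeff_C, Polynomial.coeff_X]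
    rw [h] at hdeg
    simp at hdeg
    exact ha hdeg.symm
  have hdeg : p.natDegree ≤ 2 := by
    apply Polynomial.natDegree_add_le_of_degree_le
    apply Polynomial.natDegree_add_le_of_degree_le
    · exact (Polynomial.natDegree_C_mul_le a _).trans (by simp)
    · exact (Polynomial.natDegree_C_mul_le b _).trans (by simp)
    · simp
  calc (Finset.univ.filter (fun α : F => a * α ^ 2 + b * α + c = v)).card
      ≤ p.roots.toFinset.card := by
        apply Finset.card_le_card
        intro α hα
        simp only [Finset.mem_filter, Finset.mem_univ, true_and] at hα
        rw [Multiset.mem_toFinset, Polynomial.mem_roots hpne]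
        simp only [Polynomial.IsRoot, hpdef, Polynomial.eval_add, Polynomial.eval_mul,
          Polynomial.eval_C, Polynomial.eval_X, Polynomial.eval_pow]
        linear_combination hα
    _ ≤ Multiset.card p.roots := p.roots.toFinset_card_le
    _ ≤ p.natDegree := p.card_roots'
    _ ≤ 2 := hdeg

/-- If `2^m − 1` is a Mersenne prime exceeding 13, then for any `a, b, c ∈ F_{2^m}` with
`a ≠ 0` and `b² − 4ac ≠ 0` and any `β ∈ F_2`, there exists a primitive element `α` of
`F_{2^m}` such that `a·α² + b·α + c` is also primitive and `Tr(α) = β`. -/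
theorem primitive_pair_with_trace_mersenne
    (m : ℕ) (hm : 0 < m) (hp : Nat.Prime (2 ^ m - 1)) (h13 : 13 < 2 ^ m - 1)
    (F : Type) [Field F] [Fintype F] [Algebra (ZMod 2) F]
    (hcardF : Fintype.card F = 2 ^ m)
    (a b c : F) (ha : a ≠ 0) (hdisc : b ^ 2 - 4 * a * c ≠ 0) (β : ZMod 2) :
    ∃ α : F, orderOf α = 2 ^ m - 1 ∧
      orderOf (a * α ^ 2 + b * α + c) = 2 ^ m - 1 ∧
      Algebra.trace (ZMod 2) F α = β := by
  classical
  -- every x ≠ 0, 1 is primitive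
  have hcardU : Fintype.card Fˣ = 2 ^ m - 1 := by
    rw [Fintype.card_units, hcardF]
  have prim : ∀ x : F, x ≠ 0 → x ≠ 1 → orderOf x = 2 ^ m - 1 := by
    intro x hx0 hx1
    have hx : orderOf (Units.mk0 x hx0) ∣ 2 ^ m - 1 := hcardU ▸ orderOf_dvd_card
    rcases (Nat.dvd_prime hp).mp hx with h1 | h1
    · exfalso
      rw [orderOf_eq_one_iff] at h1
      apply hx1
      have := congrArg (Units.val) h1
      simpa using this
    · rw [← h1, ← orderOf_units, Units.val_mk0]
  -- trace is surjective
  have : FiniteDimensional (ZMod 2) F := Module.Finite.of_finite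
  have htr : Algebra.trace (ZMod 2) F ≠ 0 := Algebra.trace_ne_zero (ZMod 2) F
  obtain ⟨x0, hx0⟩ : ∃ x0 : F, Algebra.trace (ZMod 2) F x0 = 1 := by
    by_contra h
    push_neg at h
    apply htr
    ext x
    have := h x
    simp only [LinearMap.zero_apply]
    have hx : Algebra.trace (ZMod 2) F x = 0 ∨ Algebra.trace (ZMod 2) F x = 1 := by
      generalize Algebra.trace (ZMod 2) F x = y; revert y; decide
    tauto
  -- counting
  set T := Finset.univ.filter (fun α : F => Algebra.trace (ZMod 2) F α = β) with hT
  set B := Finset.univ.filter (fun α : F => α = 0 ∨ α = 1 ∨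
      a * α ^ 2 + b * α + c = 0 ∨ a * α ^ 2 + b * α + c = 1) with hB
  have hTcard : 2 * T.card = 2 ^ m := by
    rw [hT, aux_card_filter_eq x0 hx0 β, hcardF]
  have hBcard : B.card ≤ 6 := by
    have hsub : B ⊆ ({0, 1} : Finset F)
        ∪ Finset.univ.filter (fun α : F => a * α ^ 2 + b * α + c = 0)
        ∪ Finset.univ.filter (fun α : F => a * α ^ 2 + b * α + c = 1) := by
      intro α hα
      simp only [hB, Finset.mem_filter, Finset.mem_univ, true_and] at hα
      simp only [Finset.mem_union, Finset.mem_insert, Finset.mem_singleton,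
        Finset.mem_filter, Finset.mem_univ, true_and]
      tauto
    calc B.card ≤ _ := Finset.card_le_card hsub
      _ ≤ _ := (Finset.card_union_le _ _)
      _ ≤ 6 := by
          have h1 := Finset.card_union_le ({0, 1} : Finset F)
            (Finset.univ.filter (fun α : F => a * α ^ 2 + b * α + c = 0))
          have h2 := aux_quad_fiber_card a b c 0 ha
          have h3 := aux_quad_fiber_card a b c 1 ha
          have h4 : ({0, 1} : Finset F).card ≤ 2 := by
            apply (Finset.card_insert_le _ _).trans; simp
          omega
  have hTbig : 6 < T.card := by
    have : 16 ≤ 2 ^ m := by omega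
    omega
  obtain ⟨α, hαT, hαB⟩ : ∃ α, α ∈ T ∧ α ∉ B := by
    have : (T \ B).Nonempty := by
      apply Finset.card_pos.mp
      have := Finset.le_card_sdiff B T
      omega
    obtain ⟨α, hα⟩ := this
    exact ⟨α, Finset.mem_sdiff.mp hα⟩
  simp only [hT, Finset.mem_filter, Finset.mem_univ, true_and] at hαT
  simp only [hB, Finset.mem_filter, Finset.mem_univ, true_and] at hαB
  push_neg at hαB
  obtain ⟨h0, h1, h2, h3⟩ := hαB
  exact ⟨α, prim α h0 h1, prim _ h2 h3, hαT⟩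
end

section
/- Let q be a prime power, m a positive integer, and let a, b, c ∈ F_{q^m} with a ≠ 0 and b² − 4ac ≠ 0. Let m₁, m₂ be integers with 0 ≤ m₁, m₂ ≤ q^m − 2 and set F(x) = x^{m₁}(ax² + bx + c)^{m₂} ∈ F_{q^m}[x]. If F(x) = y·H(x)^{q^m − 1} for some y ∈ F_{q^m} and some polynomial H ∈ F_{q^m}[x], then m₁ = m₂ = 0. -/
open Polynomial

private lemma rootMult_pow {K : Type*} [CommRing K] [IsDomain K] {p : Polynomial K}
    (hp : p ≠ 0) (x : K) (k : ℕ) :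
    rootMultiplicity x (p ^ k) = k * rootMultiplicity x p := by
  induction k with
  | zero =>
    rw [pow_zero, Nat.zero_mul]
    exact rootMultiplicity_eq_zero (by simp [IsRoot])
  | succ k ih =>
    rw [pow_succ, rootMultiplicity_mul (mul_ne_zero (pow_ne_zero _ hp) hp), ih]
    ring

private lemma pow_mult_zero {K : Type*} [Field K] {n mm : ℕ} {t y : K} (hy : y ≠ 0)
    {P H : Polynomial K} (hP : P ≠ 0) (hmult : rootMultiplicity t P = mm)
    (hEq : P = C y * H ^ n) (hlt : mm < n) : mm = 0 := by
  have hn : 0 < n := lt_of_le_of_lt (Nat.zero_le _) hlt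
  have hH : H ≠ 0 := by
    rintro rfl
    rw [zero_pow hn.ne', mul_zero] at hEq
    exact hP hEq
  have hCy : (C y : Polynomial K) ≠ 0 := C_ne_zero.mpr hy
  have h1 : rootMultiplicity t P = n * rootMultiplicity t H := by
    rw [hEq, rootMultiplicity_mul (by
      rw [← hEq]; exact hP), rootMultiplicity_C, rootMult_pow hH, zero_add]
  rw [hmult] at h1
  rcases Nat.eq_zero_or_pos (rootMultiplicity t H) with h | h
  · rw [h, mul_zero] at h1; exact h1
  · exfalso
    have : n ≤ mm := by
      calc n = n * 1 := (mul_one n).symm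
        _ ≤ n * rootMultiplicity t H := Nat.mul_le_mul_left _ h
        _ = mm := h1.symm
    omega

/-- If `F(x) = x^{m₁}·(a x² + b x + c)^{m₂}` with `0 ≤ m₁, m₂ ≤ q^m − 2` equals
`y·H(x)^{q^m − 1}` for some `y ∈ F_{q^m}` and `H ∈ F_{q^m}[x]`, then `m₁ = m₂ = 0`. -/
theorem not_power_unless_trivial
    (q m : ℕ) (hq : IsPrimePow q) (hm : 0 < m)
    (F : Type) [Field F] [Fintype F] (hcardF : Fintype.card F = q ^ m)
    (a b c : F) (ha : a ≠ 0) (hdisc : b ^ 2 - 4 * a * c ≠ 0)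
    (m₁ m₂ : ℕ) (hm₁ : m₁ ≤ q ^ m - 2) (hm₂ : m₂ ≤ q ^ m - 2)
    (y : F) (H : Polynomial F)
    (hF : (X : Polynomial F) ^ m₁ * (C a * X ^ 2 + C b * X + C c) ^ m₂ =
      C y * H ^ (q ^ m - 1)) :
    m₁ = 0 ∧ m₂ = 0 := by
  have hq2 : 2 ≤ q := hq.two_le
  have hqm : 2 ≤ q ^ m := hq2.trans (Nat.le_self_pow hm.ne' q)
  set n := q ^ m - 1 with hn
  have hm₂n : m₂ < n := by omega
  have hm₁n : m₁ < n := by omega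
  have hn1 : 0 < n := by omega
  -- nonvanishing
  have hquad : (C a * X ^ 2 + C b * X + C c : Polynomial F) ≠ 0 := by
    intro h
    have h2 := leadingCoeff_quadratic (b := b) (c := c) ha
    rw [h, leadingCoeff_zero] at h2
    exact ha h2.symm
  have hLHS : (X : Polynomial F) ^ m₁ * (C a * X ^ 2 + C b * X + C c) ^ m₂ ≠ 0 :=
    mul_ne_zero (pow_ne_zero _ X_ne_zero) (pow_ne_zero _ hquad)
  have hRHS : (C y : Polynomial F) * H ^ n ≠ 0 := hF ▸ hLHS
  have hy : y ≠ 0 := by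
    intro h; rw [h, C_0, zero_mul] at hRHS; exact hRHS rfl
  -- move to the algebraic closure
  set K := AlgebraicClosure F with hK
  set f : F →+* K := algebraMap F K with hf
  have hfa : f a ≠ 0 := (map_ne_zero f).mpr ha
  have hfy : f y ≠ 0 := (map_ne_zero f).mpr hy
  have hFK := congrArg (Polynomial.map f) hF
  simp only [Polynomial.map_mul, Polynomial.map_pow, Polynomial.map_add,
    Polynomial.map_X, Polynomial.map_C] at hFK
  set Q : Polynomial K := C (f a) * X ^ 2 + C (f b) * X + C (f c) with hQ
  have hQdeg : Q.natDegree = 2 := natDegree_quadratic hfa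
  have hQne : Q ≠ 0 := by
    intro h
    have h2 := leadingCoeff_quadratic (b := f b) (c := f c) hfa
    rw [← hQ, h, leadingCoeff_zero] at h2
    exact hfa h2.symm
  have hsplits : Splits Q := IsAlgClosed.splits Q
  have hcard : Multiset.card Q.roots = Q.natDegree :=
    (splits_iff_card_roots).mp hsplits
  rw [hQdeg] at hcard
  obtain ⟨r, s, hrs_roots⟩ := Multiset.card_eq_two.mp hcard
  have hfact : Q = C (f a) * ((X - C r) * (X - C s)) := by
    have h1 := C_leadingCoeff_mul_prod_multiset_X_sub_C
      (p := Q) (by rw [hcard, hQdeg])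
    have hlc : Q.leadingCoeff = f a := leadingCoeff_quadratic hfa
    rw [hlc, hrs_roots] at h1
    simp only [Multiset.insert_eq_cons, Multiset.map_cons, Multiset.map_singleton,
      Multiset.prod_cons, Multiset.prod_singleton] at h1
    exact h1.symm
  -- r ≠ s from the discriminant
  have e0 : f c = f a * (r * s) := by
    have := congrArg (eval 0) hfact
    simp only [hQ, eval_add, eval_mul, eval_pow, eval_C, eval_X, eval_sub] at this
    linear_combination this
  have e1 : f a + f b + f c = f a * ((1 - r) * (1 - s)) := by
    have := congrArg (eval 1) hfact
    simp only [hQ, eval_add, eval_mul, eval_pow, eval_C, eval_X, eval_sub, eval_one] at this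
    linear_combination this
  have hB : f b = -(f a * r) - f a * s := by linear_combination e1 - e0
  have hdK : (f b) ^ 2 - 4 * f a * f c ≠ 0 := by
    have : f (b ^ 2 - 4 * a * c) ≠ 0 := (map_ne_zero f).mpr hdisc
    simpa [map_sub, map_mul, map_pow, map_ofNat] using this
  have hrs : r ≠ s := by
    rintro rfl
    apply hdK
    linear_combination (f b - 2 * f a * r) * hB - 4 * f a * e0
  -- equation in K with the factorization
  rw [hfact] at hFK
  -- m₂ = 0
  have hm₂0 : m₂ = 0 := by
    -- pick a nonzero root t among r, s with the factorization written as (X - C u)*(X - C t)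
    obtain ⟨u, t, ht0, hut, hEqK⟩ :
        ∃ u t : K, t ≠ 0 ∧ u ≠ t ∧
          (X : Polynomial K) ^ m₁ * (C (f a) * ((X - C u) * (X - C t))) ^ m₂
            = C (f y) * (H.map f) ^ n := by
      rcases eq_or_ne s 0 with hs0 | hs0
      · exact ⟨s, r, fun h => hrs (h.trans hs0.symm), Ne.symm hrs,
          by rw [mul_comm (X - C r) (X - C s)] at hFK; exact hFK⟩
      · exact ⟨r, s, hs0, hrs, hFK⟩
    have hXu : (X - C u : Polynomial K) ≠ 0 := X_sub_C_ne_zero u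
    have hXt : (X - C t : Polynomial K) ≠ 0 := X_sub_C_ne_zero t
    have hinner : (C (f a) * ((X - C u) * (X - C t)) : Polynomial K) ≠ 0 :=
      mul_ne_zero (C_ne_zero.mpr hfa) (mul_ne_zero hXu hXt)
    have hPne : ((X : Polynomial K) ^ m₁ * (C (f a) * ((X - C u) * (X - C t))) ^ m₂) ≠ 0 :=
      mul_ne_zero (pow_ne_zero _ X_ne_zero) (pow_ne_zero _ hinner)
    have hmult : rootMultiplicity t
        ((X : Polynomial K) ^ m₁ * (C (f a) * ((X - C u) * (X - C t))) ^ m₂) = m₂ := by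
      rw [rootMultiplicity_mul hPne, rootMult_pow X_ne_zero, rootMult_pow hinner,
        rootMultiplicity_mul hinner,
        rootMultiplicity_mul (mul_ne_zero hXu hXt), rootMultiplicity_C,
        rootMultiplicity_X_sub_C_self,
        rootMultiplicity_eq_zero (p := (X : Polynomial K)) (by simpa [IsRoot] using ht0),
        rootMultiplicity_eq_zero (p := (X - C u : Polynomial K))
          (by simp [IsRoot, sub_eq_zero]; exact fun h => hut h.symm)]
      omega
    exact pow_mult_zero hfy hPne hmult hEqK hm₂n
  -- m₁ = 0
  subst hm₂0
  rw [pow_zero, mul_one] at hF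
  have hPne : ((X : Polynomial F) ^ m₁) ≠ 0 := pow_ne_zero _ X_ne_zero
  have hmult : rootMultiplicity (0 : F) ((X : Polynomial F) ^ m₁) = m₁ := by
    rw [rootMult_pow X_ne_zero]
    have : (X : Polynomial F) = X - C 0 := by simp
    rw [this, rootMultiplicity_X_sub_C_self, mul_one]
  exact ⟨pow_mult_zero hy hPne hmult hF hm₁n, rfl⟩
end
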